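/- Let n be a positive integer and let α_1, …, α_n ∈ [0,1]. Define F(ρ) = Σ_{r,s=1}^n ((1−α_r)α_s + (1−α_s)α_r)² ρ_r ρ_s for probability vectors ρ ∈ ℝ^n (ρ_r ≥ 0, Σ_r ρ_r = 1). Then for every probability vector ρ there exists a probability vector ρ' with at most two nonzero entries such that F(ρ') ≥ F(ρ). In particular, the maximum of F over probability vectors is attained at a vector supported on at most two indices. -/
import Mathlib

open Finset

noncomputable def S0 {n : ℕ} (v : Fin n → ℝ) : ℝ := ∑ r, v r
noncomputable def S1 {n : ℕ} (α v : Fin n → ℝ) : ℝ := ∑ r, α r * v r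
noncomputable def S2 {n : ℕ} (α v : Fin n → ℝ) : ℝ := ∑ r, (α r)^2 * v r
noncomputable def Fq {n : ℕ} (α v : Fin n → ℝ) : ℝ :=
  ∑ r, ∑ s, ((1 - α r) * α s + (1 - α s) * α r) ^ 2 * v r * v s

lemma Fq_eq {n : ℕ} (α v : Fin n → ℝ) :
    Fq α v = 2 * S0 v * S2 α v + 4 * (S2 α v)^2 + 2 * (S1 α v)^2 - 8 * S1 α v * S2 α v := by
  unfold Fq S0 S1 S2
  have h : ∀ r s : Fin n, ((1 - α r) * α s + (1 - α s) * α r) ^ 2 * v r * v s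
      = ((α r)^2 * v r) * (v s) + (v r) * ((α s)^2 * v s)
        + (4 * ((α r)^2 * v r)) * ((α s)^2 * v s)
        + (2 * (α r * v r)) * (α s * v s)
        - (4 * ((α r)^2 * v r)) * (α s * v s)
        - (4 * (α r * v r)) * ((α s)^2 * v s) := by
    intro r s; ring
  simp only [h, sum_add_distrib, sum_sub_distrib, ← mul_sum, ← sum_mul]
  ring

lemma S0_lin {n : ℕ} (ρ d : Fin n → ℝ) (t : ℝ) :
    S0 (fun r => ρ r + t * d r) = S0 ρ + t * S0 d := by
  unfold S0; rw [sum_add_distrib, mul_sum]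

lemma S1_lin {n : ℕ} (α ρ d : Fin n → ℝ) (t : ℝ) :
    S1 α (fun r => ρ r + t * d r) = S1 α ρ + t * S1 α d := by
  unfold S1
  have h : ∀ r, α r * (ρ r + t * d r) = α r * ρ r + t * (α r * d r) := by intro r; ring
  simp only [h]; rw [sum_add_distrib, mul_sum]

lemma S2_lin {n : ℕ} (α ρ d : Fin n → ℝ) (t : ℝ) :
    S2 α (fun r => ρ r + t * d r) = S2 α ρ + t * S2 α d := by
  unfold S2
  have h : ∀ r, (α r)^2 * (ρ r + t * d r) = (α r)^2 * ρ r + t * ((α r)^2 * d r) := by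
    intro r; ring
  simp only [h]; rw [sum_add_distrib, mul_sum]

lemma stmt2_step {n : ℕ} (α ρ d : Fin n → ℝ) (hρ0 : ∀ r, 0 ≤ ρ r) (hsum : S0 ρ = 1)
    (hd0 : S0 d = 0) (hd1 : S1 α d = 0) (hdne : ∃ r, d r ≠ 0)
    (hsupp : ∀ r, d r ≠ 0 → 0 < ρ r) :
    ∃ ρ'' : Fin n → ℝ, (∀ r, 0 ≤ ρ'' r) ∧ S0 ρ'' = 1 ∧ Fq α ρ ≤ Fq α ρ'' ∧
      (univ.filter (fun r => ρ'' r ≠ 0)).card < (univ.filter (fun r => ρ r ≠ 0)).card := by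
  classical
  -- choose direction e = ±d with nonnegative linear coefficient
  obtain ⟨e, he0, he1, heL, hed⟩ :
      ∃ e : Fin n → ℝ, S0 e = 0 ∧ S1 α e = 0 ∧
        0 ≤ (2 * S0 ρ + 8 * S2 α ρ - 8 * S1 α ρ) * S2 α e ∧
        (∀ r, e r ≠ 0 ↔ d r ≠ 0) := by
    rcases le_or_gt 0 ((2 * S0 ρ + 8 * S2 α ρ - 8 * S1 α ρ) * S2 α d) with h | h
    · exact ⟨d, hd0, hd1, h, fun r => Iff.rfl⟩
    · refine ⟨fun r => -(d r), ?_, ?_, ?_, ?_⟩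
      · unfold S0 at hd0 ⊢; rw [sum_neg_distrib, hd0, neg_zero]
      · unfold S1 at hd1 ⊢; simpa [mul_neg, ← sum_neg_distrib] using congrArg Neg.neg hd1
      · have : S2 α (fun r => -(d r)) = - S2 α d := by
          unfold S2; simp [mul_neg, ← sum_neg_distrib]
        rw [this]; nlinarith
      · intro r; simp
  have key : ∀ t : ℝ, Fq α (fun r => ρ r + t * e r)
      = Fq α ρ + t * ((2 * S0 ρ + 8 * S2 α ρ - 8 * S1 α ρ) * S2 α e)
        + t^2 * (4 * (S2 α e)^2) := by
    intro t
    rw [Fq_eq, Fq_eq, S0_lin, S1_lin, S2_lin, he0, he1]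
    ring
  -- e has a negative coordinate
  obtain ⟨r₁, hr₁⟩ := hdne
  have her₁ : e r₁ ≠ 0 := (hed r₁).mpr hr₁
  have hneg : ∃ r, e r < 0 := by
    by_contra h
    push_neg at h
    have := (Finset.sum_eq_zero_iff_of_nonneg (fun r _ => h r)).mp he0
    exact her₁ (this r₁ (mem_univ r₁))
  obtain ⟨r2, hr2⟩ := hneg
  have hsne : (univ.filter (fun r => e r < 0)).Nonempty := ⟨r2, by simp [hr2]⟩
  obtain ⟨r₀, hr₀mem, hr₀min⟩ :=
    Finset.exists_min_image (univ.filter (fun r => e r < 0)) (fun r => ρ r / (-(e r))) hsne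
  have hr₀ : e r₀ < 0 := by simpa using hr₀mem
  set t : ℝ := ρ r₀ / (-(e r₀)) with htdef
  have ht0 : 0 ≤ t := div_nonneg (hρ0 r₀) (by linarith)
  refine ⟨fun r => ρ r + t * e r, ?_, ?_, ?_, ?_⟩
  · intro r
    show 0 ≤ ρ r + t * e r
    by_cases hre : e r < 0
    · have hle : t ≤ ρ r / (-(e r)) := hr₀min r (by simp [hre])
      have h2 : t * (-(e r)) ≤ ρ r := (le_div_iff₀ (by linarith)).mp hle
      linarith
    · have h1 : 0 ≤ e r := not_lt.mp hre
      have := mul_nonneg ht0 h1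
      linarith [hρ0 r]
  · rw [S0_lin, hsum, he0]; ring
  · rw [key t]
    nlinarith [mul_nonneg ht0 heL, sq_nonneg (S2 α e), sq_nonneg t]
  · apply Finset.card_lt_card
    rw [Finset.ssubset_iff_of_subset]
    · refine ⟨r₀, ?_, ?_⟩
      · have : d r₀ ≠ 0 := (hed r₀).mp (ne_of_lt hr₀)
        simp [ne_of_gt (hsupp r₀ this)]
      · simp only [mem_filter, mem_univ, true_and, not_not]
        have hne : e r₀ ≠ 0 := ne_of_lt hr₀
        show ρ r₀ + t * e r₀ = 0
        rw [htdef, div_neg, neg_mul, div_mul_eq_mul_div, mul_div_assoc, div_self hne]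
        ring
    · intro r hr
      simp only [mem_filter, mem_univ, true_and] at hr ⊢
      intro hrρ
      by_cases hre : e r = 0
      · apply hr; simp [hre, hrρ]
      · exact absurd hrρ (ne_of_gt (hsupp r ((hed r).mp hre)))

theorem stmt_2 (n : ℕ) (hn : 0 < n) (α : Fin n → ℝ)
    (hα : ∀ r, α r ∈ Set.Icc (0 : ℝ) 1)
    (F : (Fin n → ℝ) → ℝ)
    (hF : ∀ ρ : Fin n → ℝ,
      F ρ = ∑ r, ∑ s, ((1 - α r) * α s + (1 - α s) * α r) ^ 2 * ρ r * ρ s)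
    (ρ : Fin n → ℝ) (hρ : ∀ r, 0 ≤ ρ r) (hsum : ∑ r, ρ r = 1) :
    ∃ ρ' : Fin n → ℝ, (∀ r, 0 ≤ ρ' r) ∧ (∑ r, ρ' r = 1) ∧
      (∃ i j : Fin n, ∀ r, r ≠ i → r ≠ j → ρ' r = 0) ∧ F ρ ≤ F ρ' := by
  classical
  have hFq : ∀ v, F v = Fq α v := fun v => hF v
  have main : ∀ k : ℕ, ∀ ρ : Fin n → ℝ, (∀ r, 0 ≤ ρ r) → S0 ρ = 1 →
      (univ.filter (fun r => ρ r ≠ 0)).card ≤ k →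
      ∃ ρ' : Fin n → ℝ, (∀ r, 0 ≤ ρ' r) ∧ S0 ρ' = 1 ∧
        (∃ i j : Fin n, ∀ r, r ≠ i → r ≠ j → ρ' r = 0) ∧ Fq α ρ ≤ Fq α ρ' := by
    intro k
    induction k with
    | zero =>
      intro ρ h0 h1 hcard
      refine ⟨ρ, h0, h1, ⟨⟨0, hn⟩, ⟨0, hn⟩, fun r hri hrj => ?_⟩, le_refl _⟩
      by_contra h
      have : r ∈ univ.filter (fun r => ρ r ≠ 0) := by simp [h]
      rw [Nat.le_zero, Finset.card_eq_zero] at hcard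
      simp [hcard] at this
    | succ k ih =>
      intro ρ h0 h1 hcard
      by_cases hsmall : (univ.filter (fun r => ρ r ≠ 0)).card ≤ 2
      · refine ⟨ρ, h0, h1, ?_, le_refl _⟩
        set s := univ.filter (fun r => ρ r ≠ 0) with hs
        have hmem : ∀ r, ρ r ≠ 0 → r ∈ s := by intro r hr; simp [hs, hr]
        rcases s.eq_empty_or_nonempty with he | ⟨i, hi⟩
        · exact ⟨⟨0, hn⟩, ⟨0, hn⟩, fun r hri hrj => by
            by_contra h; have := hmem r h; simp [he] at this⟩
        · rcases (s.erase i).eq_empty_or_nonempty with he2 | ⟨j, hj⟩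
          · refine ⟨i, i, fun r hri _ => ?_⟩
            by_contra h
            have : r ∈ s.erase i := Finset.mem_erase.mpr ⟨hri, hmem r h⟩
            simp [he2] at this
          · refine ⟨i, j, fun r hri hrj => ?_⟩
            by_contra h
            have hr : r ∈ (s.erase i).erase j :=
              Finset.mem_erase.mpr ⟨hrj, Finset.mem_erase.mpr ⟨hri, hmem r h⟩⟩
            have hcard3 : 2 < s.card := by
              have h1' : ((s.erase i).erase j).card + 1 ≤ (s.erase i).card :=
                Finset.card_lt_card (Finset.ssubset_iff_of_subset (Finset.erase_subset _ _)
                  |>.mpr ⟨j, hj, Finset.notMem_erase _ _⟩)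
              have h2' : (s.erase i).card + 1 ≤ s.card :=
                Finset.card_lt_card (Finset.ssubset_iff_of_subset (Finset.erase_subset _ _)
                  |>.mpr ⟨i, hi, Finset.notMem_erase _ _⟩)
              have h3' : 1 ≤ ((s.erase i).erase j).card := Finset.card_pos.mpr ⟨r, hr⟩
              omega
            omega
      · push_neg at hsmall
        obtain ⟨i, j, l, hi, hj, hl, hij, hil, hjl⟩ := Finset.two_lt_card_iff.mp hsmall
        simp only [mem_filter, mem_univ, true_and] at hi hj hl
        have hρi : 0 < ρ i := lt_of_le_of_ne (h0 i) (Ne.symm hi)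
        have hρj : 0 < ρ j := lt_of_le_of_ne (h0 j) (Ne.symm hj)
        have hρl : 0 < ρ l := lt_of_le_of_ne (h0 l) (Ne.symm hl)
        -- choose coefficients a b c
        obtain ⟨a, b, c, habc, hαabc, hne⟩ :
            ∃ a b c : ℝ, a + b + c = 0 ∧ α i * a + α j * b + α l * c = 0 ∧
              (a ≠ 0 ∨ b ≠ 0 ∨ c ≠ 0) := by
          by_cases hall : α i = α j ∧ α j = α l
          · exact ⟨1, -1, 0, by ring, by rw [hall.1]; ring, Or.inl one_ne_zero⟩
          · refine ⟨α j - α l, α l - α i, α i - α j, by ring, by ring, ?_⟩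
            by_contra h
            push_neg at h
            obtain ⟨h1', h2', h3'⟩ := h
            exact hall ⟨by linarith [sub_eq_zero.mp (not_not.mp (by simpa using h3'))],
              by linarith [sub_eq_zero.mp (not_not.mp (by simpa using h1'))]⟩
        set d : Fin n → ℝ := fun r =>
          (if r = i then a else 0) + (if r = j then b else 0) + (if r = l then c else 0)
          with hd
        have hd0 : S0 d = 0 := by
          unfold S0
          simp only [hd, sum_add_distrib, sum_ite_eq', mem_univ, if_true]
          exact habc
        have hd1 : S1 α d = 0 := by
          unfold S1
          simp only [hd, mul_add, sum_add_distrib, mul_ite, mul_zero, sum_ite_eq',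
            mem_univ, if_true]
          exact hαabc
        have hdval : d i = a ∧ d j = b ∧ d l = c := by
          refine ⟨?_, ?_, ?_⟩ <;> simp [hd, hij, hil, hjl, hij.symm, hil.symm, hjl.symm]
        have hdne : ∃ r, d r ≠ 0 := by
          rcases hne with h | h | h
          · exact ⟨i, by rw [hdval.1]; exact h⟩
          · exact ⟨j, by rw [hdval.2.1]; exact h⟩
          · exact ⟨l, by rw [hdval.2.2]; exact h⟩
        have hsupp : ∀ r, d r ≠ 0 → 0 < ρ r := by
          intro r hr
          by_cases h1' : r = i; · rwa [h1']
          by_cases h2' : r = j; · rwa [h2']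
          by_cases h3' : r = l; · rwa [h3']
          exfalso; apply hr; simp [hd, h1', h2', h3']
        obtain ⟨ρ'', h''0, h''1, h''F, h''card⟩ := stmt2_step α ρ d h0 h1 hd0 hd1 hdne hsupp
        obtain ⟨ρ', h'0, h'1, h'supp, h'F⟩ := ih ρ'' h''0 h''1 (by omega)
        exact ⟨ρ', h'0, h'1, h'supp, le_trans h''F h'F⟩
  obtain ⟨ρ', h'0, h'1, h'supp, h'F⟩ :=
    main (univ.filter (fun r => ρ r ≠ 0)).card ρ hρ hsum le_rfl
  exact ⟨ρ', h'0, h'1, h'supp, by rw [hFq, hFq]; exact h'F⟩
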